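/- Let γ ≥ 2 be an integer, set n_j = γ^j for j ≥ 1, and let 0 < β₁ < β₂ < 1/2. Let φ₁, φ₂ : {1,2,…} → ℝ and suppose there exist ε > 0 and N₀ such that for all n ≥ N₀, if j is the index with n_j < n ≤ n_{j+1}, then (φ₁(n−1)² + φ₁(n)²)^{1/2} ≤ n_j^{−β₁−ε} and n_j^{β₁} ≤ (φ₂(n−1)² + φ₂(n)²)^{1/2} ≤ n_j^{β₂}. If s > 4β₂/(1 − 2β₂) − 2β₁ + 1/2, then there exists η̃ > 4β₂/(1 − 2β₂) such that Σ_{n=1}^∞ (|φ₁(n)|⁴ n^{2η̃} + |φ₂(n)|⁴) · n^{−2s} < ∞. -/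

import Mathlib

set_option maxHeartbeats 1000000 in
/-- the summability verification for Zlatoš's sparse
potentials, Section 5 of Breuer–Last: with `n_j = γ^j` and solutions
satisfying the sparse-potential bounds with exponents `0 < β₁ < β₂ < 1/2`,
if `s > 4β₂/(1 − 2β₂) − 2β₁ + 1/2` then there is `η̃ > 4β₂/(1 − 2β₂)` with
`∑ (|φ₁ n|⁴ n^{2η̃} + |φ₂ n|⁴) n^{−2s} < ∞`. -/
theorem sparse_potential_summability
    (γ : ℕ) (hγ : 2 ≤ γ) (β₁ β₂ : ℝ)
    (hβ₁ : 0 < β₁) (hβ₁₂ : β₁ < β₂) (hβ₂ : β₂ < 1 / 2)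
    (φ1 φ2 : ℕ → ℝ)
    (hbounds : ∃ ε : ℝ, 0 < ε ∧ ∃ N₀ : ℕ, ∀ j : ℕ, 1 ≤ j → ∀ n : ℕ,
      N₀ ≤ n → γ ^ j < n → n ≤ γ ^ (j + 1) →
        Real.sqrt ((φ1 (n - 1)) ^ 2 + (φ1 n) ^ 2) ≤
            ((γ : ℝ) ^ j) ^ (-β₁ - ε) ∧
          ((γ : ℝ) ^ j) ^ β₁ ≤ Real.sqrt ((φ2 (n - 1)) ^ 2 + (φ2 n) ^ 2) ∧
          Real.sqrt ((φ2 (n - 1)) ^ 2 + (φ2 n) ^ 2) ≤ ((γ : ℝ) ^ j) ^ β₂)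
    (s : ℝ) (hs : 4 * β₂ / (1 - 2 * β₂) - 2 * β₁ + 1 / 2 < s) :
    ∃ ηt : ℝ, 4 * β₂ / (1 - 2 * β₂) < ηt ∧
      Summable (fun n : ℕ =>
        (|φ1 n| ^ 4 * (n : ℝ) ^ (2 * ηt) + |φ2 n| ^ 4) *
          (n : ℝ) ^ (-(2 * s))) := by
  obtain ⟨ε, hε, N₀, hB⟩ := hbounds
  have h12 : (0:ℝ) < 1 - 2 * β₂ := by linarith
  have hAge : 4 * β₂ ≤ 4 * β₂ / (1 - 2 * β₂) := by
    rw [le_div_iff₀ h12]; nlinarith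
  have hδ : 0 < s - (4 * β₂ / (1 - 2 * β₂) - 2 * β₁ + 1 / 2) := by linarith
  set δ : ℝ := s - (4 * β₂ / (1 - 2 * β₂) - 2 * β₁ + 1 / 2) with hδ_def
  set ηt : ℝ := 4 * β₂ / (1 - 2 * β₂) + δ / 2 with hηt_def
  refine ⟨ηt, by linarith, ?_⟩
  set p : ℝ := 2 * ηt - 2 * s - 4 * β₁ with hp_def
  set q : ℝ := 4 * β₂ - 2 * s with hq_def
  have hp : p < -1 := by rw [hp_def, hηt_def, hδ_def]; linarith
  have hq : q < -1 := by rw [hq_def]; linarith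
  have hγR : (2:ℝ) ≤ (γ:ℝ) := by exact_mod_cast hγ
  set C : ℝ := (γ:ℝ) ^ (β₁ + ε) with hC_def
  have hC : 0 < C := Real.rpow_pos_of_pos (by linarith) _
  have hg : Summable (fun n : ℕ => C ^ 4 * (n:ℝ) ^ p + (n:ℝ) ^ q) :=
    ((Real.summable_nat_rpow.mpr hp).mul_left _).add
      (Real.summable_nat_rpow.mpr hq)
  set f : ℕ → ℝ := fun n =>
    (|φ1 n| ^ 4 * (n : ℝ) ^ (2 * ηt) + |φ2 n| ^ 4) * (n : ℝ) ^ (-(2 * s))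
    with hf_def
  have hf_nonneg : ∀ n, 0 ≤ f n := by
    intro n
    apply mul_nonneg _ (Real.rpow_nonneg (Nat.cast_nonneg n) _)
    apply add_nonneg _ (by positivity)
    exact mul_nonneg (by positivity) (Real.rpow_nonneg (Nat.cast_nonneg n) _)
  set N : ℕ := max N₀ (γ + 1) with hN_def
  have hfg : ∀ n : ℕ, N ≤ n → f n ≤ C ^ 4 * (n:ℝ) ^ p + (n:ℝ) ^ q := by
    intro n hn
    have hnN₀ : N₀ ≤ n := le_trans (le_max_left _ _) hn
    have hnγ : γ + 1 ≤ n := le_trans (le_max_right _ _) hn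
    have hn1γ : γ ≤ n - 1 := by omega
    have hγ1 : 1 < γ := hγ
    set j : ℕ := Nat.log γ (n - 1) with hj_def
    have hj1 : 1 ≤ j := by
      rw [hj_def, Nat.le_log_iff_pow_le hγ1 (by omega)]
      simpa using hn1γ
    have hlow : γ ^ j ≤ n - 1 := Nat.pow_log_le_self γ (by omega)
    have hhigh : n - 1 < γ ^ (j + 1) := Nat.lt_pow_succ_log_self hγ1 _
    have hlow' : γ ^ j < n := by omega
    have hhigh' : n ≤ γ ^ (j + 1) := by omega
    obtain ⟨h1, h2l, h2u⟩ := hB j hj1 n hnN₀ hlow' hhigh'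
    have hnpos : (0:ℝ) < (n:ℝ) := by
      have : 0 < n := by omega
      exact_mod_cast this
    have hn1R : (1:ℝ) ≤ (n:ℝ) := by
      have : 1 ≤ n := by omega
      exact_mod_cast this
    have hγjpos : (0:ℝ) < (γ:ℝ) ^ j := by positivity
    have hφ1 : |φ1 n| ≤ ((γ:ℝ) ^ j) ^ (-β₁ - ε) := by
      refine le_trans ?_ h1
      rw [← Real.sqrt_sq_eq_abs]
      exact Real.sqrt_le_sqrt (le_add_of_nonneg_left (sq_nonneg _))
    have hφ2 : |φ2 n| ≤ ((γ:ℝ) ^ j) ^ β₂ := by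
      refine le_trans ?_ h2u
      rw [← Real.sqrt_sq_eq_abs]
      exact Real.sqrt_le_sqrt (le_add_of_nonneg_left (sq_nonneg _))
    have hnle : (n:ℝ) ≤ (γ:ℝ) * (γ:ℝ) ^ j := by
      have : (n:ℝ) ≤ ((γ ^ (j+1) : ℕ) : ℝ) := by exact_mod_cast hhigh'
      calc (n:ℝ) ≤ ((γ ^ (j+1) : ℕ) : ℝ) := this
        _ = (γ:ℝ) * (γ:ℝ) ^ j := by push_cast; ring
    have hjlt : (γ:ℝ) ^ j < (n:ℝ) := by
      have : ((γ ^ j : ℕ) : ℝ) < (n:ℝ) := by exact_mod_cast hlow'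
      simpa using this
    have hdiv : (n:ℝ) / (γ:ℝ) ≤ (γ:ℝ) ^ j := by
      rw [div_le_iff₀ (by linarith)]
      linarith
    have hφ1' : |φ1 n| ≤ C * (n:ℝ) ^ (-β₁) := by
      have step1 : ((γ:ℝ) ^ j) ^ (-β₁ - ε) ≤ ((n:ℝ) / (γ:ℝ)) ^ (-β₁ - ε) :=
        Real.rpow_le_rpow_of_nonpos (by positivity) hdiv (by linarith)
      have step2 : ((n:ℝ) / (γ:ℝ)) ^ (-β₁ - ε) = (n:ℝ) ^ (-β₁ - ε) * C := by
        rw [Real.div_rpow hnpos.le (by linarith : (0:ℝ) ≤ (γ:ℝ)),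
          div_eq_mul_inv, ← Real.rpow_neg (by linarith : (0:ℝ) ≤ (γ:ℝ)), hC_def]
        congr 1
        ring
      have step3 : (n:ℝ) ^ (-β₁ - ε) ≤ (n:ℝ) ^ (-β₁) :=
        Real.rpow_le_rpow_of_exponent_le hn1R (by linarith)
      calc |φ1 n| ≤ ((γ:ℝ) ^ j) ^ (-β₁ - ε) := hφ1
        _ ≤ (n:ℝ) ^ (-β₁ - ε) * C := by rw [← step2]; exact step1
        _ ≤ (n:ℝ) ^ (-β₁) * C := by
            exact mul_le_mul_of_nonneg_right step3 hC.le
        _ = C * (n:ℝ) ^ (-β₁) := by ring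
    have hφ2' : |φ2 n| ≤ (n:ℝ) ^ β₂ :=
      le_trans hφ2 (Real.rpow_le_rpow hγjpos.le hjlt.le (by linarith))
    have h14 : |φ1 n| ^ 4 ≤ (C * (n:ℝ) ^ (-β₁)) ^ 4 :=
      pow_le_pow_left₀ (abs_nonneg _) hφ1' 4
    have h24 : |φ2 n| ^ 4 ≤ ((n:ℝ) ^ β₂) ^ 4 :=
      pow_le_pow_left₀ (abs_nonneg _) hφ2' 4
    have key : f n ≤ ((C * (n:ℝ) ^ (-β₁)) ^ 4 * (n:ℝ) ^ (2 * ηt)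
        + ((n:ℝ) ^ β₂) ^ 4) * (n:ℝ) ^ (-(2 * s)) := by
      simp only [hf_def]
      refine mul_le_mul_of_nonneg_right ?_ (Real.rpow_nonneg hnpos.le _)
      exact add_le_add
        (mul_le_mul_of_nonneg_right h14 (Real.rpow_nonneg hnpos.le _)) h24
    refine key.trans (le_of_eq ?_)
    rw [mul_pow, ← Real.rpow_natCast ((n:ℝ) ^ (-β₁)) 4,
      ← Real.rpow_natCast ((n:ℝ) ^ β₂) 4,
      ← Real.rpow_mul hnpos.le, ← Real.rpow_mul hnpos.le]
    rw [add_mul, mul_assoc (C ^ 4), mul_assoc (C ^ 4),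
      ← Real.rpow_add hnpos, ← Real.rpow_add hnpos, ← Real.rpow_add hnpos]
    rw [hp_def, hq_def,
      show -β₁ * (4:ℕ) + 2 * ηt + -(2 * s) = 2 * ηt - 2 * s - 4 * β₁ by push_cast; ring,
      show β₂ * (4:ℕ) + -(2 * s) = 4 * β₂ - 2 * s by push_cast; ring]
  rw [← summable_nat_add_iff N]
  exact Summable.of_nonneg_of_le (fun n => hf_nonneg _)
    (fun n => hfg (n + N) (Nat.le_add_left _ _))
    ((summable_nat_add_iff N).mpr hg)
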